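/- Let X be a finite-dimensional real Banach space and let Y be a smooth real Banach space of dimension at least two, i.e., for every nonzero y ∈ Y there is a unique bounded linear functional f on Y with ‖f‖ = 1 and f(y) = ‖y‖. Let T : X → Y be a bounded linear operator such that M_T is a countable set with more than two points. Then T does not satisfy the Bhatia–Šemrl property; that is, there exists a bounded linear operator A : X → Y with T ⊥_B A such that Tx is not Birkhoff–James orthogonal to Ax for any x ∈ M_T. -/

import Mathlib

/-- Birkhoff–James orthogonality: `x ⊥_B y` iff `‖x + λ y‖ ≥ ‖x‖` for all real `λ`. -/
def BJOrth {E : Type*} [NormedAddCommGroup E] [NormedSpace ℝ E] (x y : E) : Prop :=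
  ∀ lam : ℝ, ‖x‖ ≤ ‖x + lam • y‖

/-- The norm attainment set of a bounded linear operator. -/
def normAttainSet {X Y : Type*} [NormedAddCommGroup X] [NormedSpace ℝ X]
    [NormedAddCommGroup Y] [NormedSpace ℝ Y] (T : X →L[ℝ] Y) : Set X :=
  {x | ‖x‖ = 1 ∧ ‖T x‖ = ‖T‖}

/-- Baire-category avoidance: a countable family of nonzero continuous linear functionals
on a complete space admits a common non-annihilated vector. -/
lemma baire_avoid {W : Type*} [NormedAddCommGroup W] [NormedSpace ℝ W] [CompleteSpace W]
    {ι : Type*} {s : Set ι} (hs : s.Countable) (φ : ι → W →L[ℝ] ℝ)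
    (hφ : ∀ i ∈ s, φ i ≠ 0) : ∃ w : W, ∀ i ∈ s, φ i w ≠ 0 := by
  rcases s.eq_empty_or_nonempty with rfl | hne
  · exact ⟨0, by simp⟩
  obtain ⟨e, he⟩ := hs.exists_eq_range hne
  by_contra hcon
  push_neg at hcon
  have hcover : (⋃ n : ℕ, {w : W | φ (e n) w = 0}) = Set.univ := by
    ext w
    simp only [Set.mem_iUnion, Set.mem_univ, iff_true, Set.mem_setOf_eq]
    obtain ⟨i, hi, hzero⟩ := hcon w
    rw [he] at hi
    obtain ⟨n, rfl⟩ := hi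
    exact ⟨n, hzero⟩
  have hclosed : ∀ n : ℕ, IsClosed {w : W | φ (e n) w = 0} :=
    fun n => isClosed_eq (φ (e n)).continuous continuous_const
  obtain ⟨n, v₀, hv₀⟩ := nonempty_interior_of_iUnion_of_closed hclosed hcover
  have hen : e n ∈ s := he ▸ Set.mem_range_self n
  apply hφ (e n) hen
  ext w
  have hmem : ∀ᶠ t in nhds (0 : ℝ), v₀ + t • w ∈ interior {w : W | φ (e n) w = 0} := by
    have hc : Continuous fun t : ℝ => v₀ + t • w := by continuity
    apply hc.continuousAt.preimage_mem_nhds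
    simpa using isOpen_interior.mem_nhds hv₀
  obtain ⟨t, htmem, htne⟩ :=
    ((hmem.filter_mono (nhdsWithin_le_nhds (s := {(0:ℝ)}ᶜ))).and
      eventually_mem_nhdsWithin).exists
  have htne' : t ≠ 0 := htne
  have h1 : v₀ + t • w ∈ {w : W | φ (e n) w = 0} := interior_subset htmem
  have h2 : v₀ ∈ {w : W | φ (e n) w = 0} := interior_subset hv₀
  simp only [Set.mem_setOf_eq] at h1 h2
  rw [map_add, map_smul, h2, zero_add, smul_eq_mul] at h1
  simpa [mul_eq_zero, htne'] using h1

/-- Prescribing the values of a continuous functional on two independent vectors. -/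
lemma exists_functional_pair {E : Type*} [NormedAddCommGroup E] [NormedSpace ℝ E]
    {x y : E} (h : LinearIndependent ℝ ![x, y]) (c d : ℝ) :
    ∃ g : E →L[ℝ] ℝ, g x = c ∧ g y = d := by
  set p := Submodule.span ℝ (Set.range ![x, y]) with hp
  haveI : FiniteDimensional ℝ p := FiniteDimensional.span_of_finite ℝ (Set.finite_range _)
  set B := Module.Basis.span h with hB
  set f₀ : p →ₗ[ℝ] ℝ := B.constr ℝ ![c, d] with hf₀
  set f₁ : p →L[ℝ] ℝ := LinearMap.toContinuousLinearMap f₀ with hf₁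
  obtain ⟨g, hg, -⟩ := exists_extension_norm_eq p f₁
  have hxmem : x ∈ p := Submodule.subset_span ⟨0, rfl⟩
  have hymem : y ∈ p := Submodule.subset_span ⟨1, rfl⟩
  have hB0 : ((B 0 : p) : E) = x := congrArg Subtype.val (Module.Basis.span_apply h 0)
  have hB1 : ((B 1 : p) : E) = y := congrArg Subtype.val (Module.Basis.span_apply h 1)
  have e0 : (⟨x, hxmem⟩ : p) = B 0 := Subtype.ext (by rw [hB0])
  have e1 : (⟨y, hymem⟩ : p) = B 1 := Subtype.ext (by rw [hB1])
  refine ⟨g, ?_, ?_⟩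
  · have := hg (B 0)
    simp only [hf₁, hf₀, LinearMap.coe_toContinuousLinearMap', Module.Basis.constr_basis] at this
    rwa [hB0] at this
  · have := hg (B 1)
    simp only [hf₁, hf₀, LinearMap.coe_toContinuousLinearMap', Module.Basis.constr_basis] at this
    rwa [hB1] at this

/-- James' characterization: if `x ⊥_B y` and `x ≠ 0` then there is a norm-one supporting
functional at `x` killing `y`. -/
lemma bj_functional {E : Type*} [NormedAddCommGroup E] [NormedSpace ℝ E]
    {x y : E} (hx : x ≠ 0) (h : BJOrth x y) :
    ∃ F : E →L[ℝ] ℝ, ‖F‖ = 1 ∧ F x = ‖x‖ ∧ F y = 0 := by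
  have hxpos : (0 : ℝ) < ‖x‖ := norm_pos_iff.2 hx
  by_cases hli : LinearIndependent ℝ ![x, y]
  · set p := Submodule.span ℝ (Set.range ![x, y]) with hp
    set B := Module.Basis.span hli with hB
    set f₀ : p →ₗ[ℝ] ℝ := B.constr ℝ ![‖x‖, 0] with hf₀
    have hB0 : ((B 0 : p) : E) = x := congrArg Subtype.val (Module.Basis.span_apply hli 0)
    have hB1 : ((B 1 : p) : E) = y := congrArg Subtype.val (Module.Basis.span_apply hli 1)
    have hbound : ∀ z : p, ‖f₀ z‖ ≤ 1 * ‖(z : E)‖ := by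
      intro z
      set a : ℝ := B.repr z 0 with ha
      set b : ℝ := B.repr z 1 with hb
      have hzrepr : (z : E) = a • x + b • y := by
        have := B.sum_repr z
        rw [Fin.sum_univ_two] at this
        have := congrArg (Subtype.val : p → E) this
        simpa [hB0, hB1, ← ha, ← hb] using this.symm
      have hfz : f₀ z = a * ‖x‖ := by
        rw [hf₀, Module.Basis.constr_apply_fintype, Fin.sum_univ_two]
        simp [B.equivFun_apply, ← ha, ← hb, smul_eq_mul]
      rw [hfz, hzrepr, one_mul]
      rcases eq_or_ne a 0 with hane0 | hane
      · rw [hane0]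
        simp [norm_nonneg]
      · have key : a • x + b • y = a • (x + (b / a) • y) := by
          rw [smul_add, smul_smul, mul_div_cancel₀ _ hane]
        rw [key, norm_smul, Real.norm_eq_abs, abs_mul, Real.norm_eq_abs,
          abs_of_nonneg (norm_nonneg x)]
        exact mul_le_mul_of_nonneg_left (h (b / a)) (abs_nonneg a)
    set f₁ : p →L[ℝ] ℝ := f₀.mkContinuous 1 hbound with hf₁
    obtain ⟨g, hg, hnorm⟩ := exists_extension_norm_eq p f₁
    have hgx : g x = ‖x‖ := by
      have := hg (B 0)
      rw [hB0] at this
      rw [this, hf₁]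
      show f₀ (B 0) = ‖x‖
      rw [hf₀]
      simpa using B.constr_basis ℝ ![‖x‖, 0] 0
    have hgy : g y = 0 := by
      have := hg (B 1)
      rw [hB1] at this
      rw [this, hf₁]
      show f₀ (B 1) = 0
      rw [hf₀]
      simpa using B.constr_basis ℝ ![‖x‖, 0] 1
    have hle : ‖g‖ ≤ 1 := hnorm ▸ LinearMap.mkContinuous_norm_le f₀ zero_le_one hbound
    have hge : 1 ≤ ‖g‖ := by
      have := g.le_opNorm x
      rw [hgx] at this
      have h1 : ‖(‖x‖ : ℝ)‖ = ‖x‖ := Real.norm_of_nonneg (norm_nonneg x)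
      rw [h1] at this
      nlinarith
    exact ⟨g, le_antisymm hle hge, hgx, hgy⟩
  · -- dependent case: y must be 0
    have hy0 : y = 0 := by
      rw [LinearIndependent.pair_iff] at hli
      push_neg at hli
      obtain ⟨s, t, hst, hne⟩ := hli
      rcases eq_or_ne t 0 with rfl | ht
      · exfalso
        have hs : s ≠ 0 := fun hs0 => hne hs0 rfl
        rw [zero_smul, add_zero, smul_eq_zero] at hst
        exact hx (hst.resolve_left hs)
      · have h1 : t • y = (-s) • x := by
          rw [neg_smul, ← eq_neg_of_add_eq_zero_right hst]
        have hyx : y = (t⁻¹ * -s) • x := by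
          calc y = (t⁻¹ * t) • y := by rw [inv_mul_cancel₀ ht, one_smul]
            _ = t⁻¹ • (t • y) := by rw [mul_smul]
            _ = t⁻¹ • ((-s) • x) := by rw [h1]
            _ = (t⁻¹ * -s) • x := by rw [smul_smul]
        set c : ℝ := t⁻¹ * -s with hcdef
        rcases eq_or_ne c 0 with hc | hc
        · rw [hyx, hc, zero_smul]
        · exfalso
          have hBJ := h (-(1 / c))
          rw [hyx] at hBJ
          have hcalc : x + (-(1 / c)) • (c • x) = 0 := by
            rw [smul_smul]
            have hm : (-(1 / c)) * c = -1 := by field_simp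
            rw [hm, neg_one_smul, add_neg_cancel]
          rw [hcalc, norm_zero] at hBJ
          linarith
    subst hy0
    obtain ⟨g, hg1, hg2⟩ := exists_dual_vector ℝ x (norm_ne_zero_iff.2 hx)
    exact ⟨g, hg1, by simpa using hg2, map_zero g⟩

/-- Two distinct unit vectors which are linearly dependent are negatives of each other. -/
lemma dep_units {E : Type*} [NormedAddCommGroup E] [NormedSpace ℝ E] {u v : E}
    (hu : ‖u‖ = 1) (hv : ‖v‖ = 1) (hne : u ≠ v)
    (hdep : ¬ LinearIndependent ℝ ![u, v]) : v = -u := by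
  have hu0 : u ≠ 0 := by
    intro h0
    rw [h0, norm_zero] at hu
    exact one_ne_zero hu.symm
  rw [LinearIndependent.pair_iff' hu0] at hdep
  push_neg at hdep
  obtain ⟨a, ha⟩ := hdep
  have habs : |a| = 1 := by
    have := congrArg norm ha
    rw [norm_smul, Real.norm_eq_abs, hu, mul_one, hv] at this
    exact this
  rcases (abs_eq (by norm_num : (0:ℝ) ≤ 1)).1 habs with h1 | h1
  · rw [h1, one_smul] at ha
    exact absurd ha hne
  · rw [h1, neg_one_smul] at ha
    rw [← ha]

set_option maxHeartbeats 1000000 in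
/-- If `X` is a finite-dimensional real Banach space, `Y` is a smooth real
Banach space of dimension at least two, and `M_T` is countable with more than two points,
then `T` does not satisfy the Bhatia–Šemrl property. -/
theorem stmt4 {X Y : Type*} [NormedAddCommGroup X] [NormedSpace ℝ X] [CompleteSpace X]
    [FiniteDimensional ℝ X]
    [NormedAddCommGroup Y] [NormedSpace ℝ Y] [CompleteSpace Y]
    (hY : 2 ≤ Module.rank ℝ Y)
    (hsmooth : ∀ y : Y, y ≠ 0 → ∃! f : Y →L[ℝ] ℝ, ‖f‖ = 1 ∧ f y = ‖y‖)
    (T : X →L[ℝ] Y)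
    (hcount : (normAttainSet T).Countable)
    (hcard : 2 < Cardinal.mk ↥(normAttainSet T)) :
    ∃ A : X →L[ℝ] Y, (∀ lam : ℝ, ‖T‖ ≤ ‖T + lam • A‖) ∧
      ∀ x ∈ normAttainSet T, ¬ BJOrth (T x) (A x) := by
  classical
  set s : Set X := normAttainSet T with hsdef
  -- step 1: two linearly independent elements of s
  obtain ⟨x₁, x₂, hx₁s, hx₂s, hli⟩ :
      ∃ x₁ x₂ : X, x₁ ∈ s ∧ x₂ ∈ s ∧ LinearIndependent ℝ ![x₁, x₂] := by
    haveI : Nontrivial ↥s :=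
      Cardinal.one_lt_iff_nontrivial.1 (lt_trans (by norm_num) hcard)
    obtain ⟨u, v, huv⟩ := exists_pair_ne ↥s
    have h3 : (3 : Cardinal) ≤ Cardinal.mk ↥s := by
      have h2 : ((2 : ℕ) : Cardinal) < Cardinal.mk ↥s := by exact_mod_cast hcard
      have := Order.succ_le_of_lt h2
      rw [← Cardinal.nat_succ] at this
      exact_mod_cast this
    obtain ⟨w, hwu, hwv⟩ := Cardinal.three_le h3 u v
    have hnu : ‖(u : X)‖ = 1 := u.2.1
    have hnv : ‖(v : X)‖ = 1 := v.2.1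
    have hnw : ‖(w : X)‖ = 1 := w.2.1
    by_cases h12 : LinearIndependent ℝ ![(u : X), (v : X)]
    · exact ⟨u, v, u.2, v.2, h12⟩
    · have hv' : (v : X) = -(u : X) :=
        dep_units hnu hnv (fun h => huv (Subtype.ext h)) h12
      by_cases h13 : LinearIndependent ℝ ![(u : X), (w : X)]
      · exact ⟨u, w, u.2, w.2, h13⟩
      · have hw' : (w : X) = -(u : X) :=
          dep_units hnu hnw (fun h => hwu (Subtype.ext h.symm)) h13
        exact absurd (Subtype.ext (hw'.trans hv'.symm)) hwv
  -- step 2: T ≠ 0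
  have hT0 : T ≠ 0 := by
    intro hT
    have hne0 : ∀ t : ℝ, x₁ + t • x₂ ≠ 0 := by
      intro t h0
      have := (LinearIndependent.pair_iff.1 hli 1 t (by rw [one_smul]; exact h0)).1
      exact one_ne_zero this
    have hmem : ∀ t : ℝ, ‖x₁ + t • x₂‖⁻¹ • (x₁ + t • x₂) ∈ s := by
      intro t
      constructor
      · rw [norm_smul, Real.norm_eq_abs, abs_of_nonneg (inv_nonneg.2 (norm_nonneg _)),
          inv_mul_cancel₀ (norm_ne_zero_iff.2 (hne0 t))]
      · rw [hT]; simp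
    have hinj : Function.Injective (fun t : ℝ => ‖x₁ + t • x₂‖⁻¹ • (x₁ + t • x₂)) := by
      intro t r hts
      simp only at hts
      set ct : ℝ := ‖x₁ + t • x₂‖⁻¹ with hct
      set cr : ℝ := ‖x₁ + r • x₂‖⁻¹ with hcr
      have hctpos : 0 < ct := inv_pos.2 (norm_pos_iff.2 (hne0 t))
      have hcrpos : 0 < cr := inv_pos.2 (norm_pos_iff.2 (hne0 r))
      have h0' : (ct - cr) • x₁ + (ct * t - cr * r) • x₂
          = ct • (x₁ + t • x₂) - cr • (x₁ + r • x₂) := by module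
      rw [hts, sub_self] at h0'
      obtain ⟨h1, h2⟩ := LinearIndependent.pair_iff.1 hli _ _ h0'
      have hcc : ct = cr := by linarith [sub_eq_zero.1 (by linarith : ct - cr = 0)]
      have : ct * t = cr * r := by linarith
      rw [hcc] at this
      exact mul_left_cancel₀ (ne_of_gt hcrpos) this
    have hpre : (fun t : ℝ => ‖x₁ + t • x₂‖⁻¹ • (x₁ + t • x₂)) ⁻¹' s = Set.univ :=
      Set.eq_univ_of_forall hmem
    have := hcount.preimage hinj
    rw [hpre] at this
    exact Cardinal.not_countable_real this
  have hTpos : 0 < ‖T‖ := norm_pos_iff.2 hT0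
  have hTx : ∀ x ∈ s, T x ≠ 0 := by
    intro x hx h0
    have := hx.2
    rw [h0, norm_zero] at this
    exact (ne_of_gt hTpos) this.symm
  -- step 3: supporting functionals
  set F : X → Y →L[ℝ] ℝ := fun x =>
    if h : T x ≠ 0 then (hsmooth (T x) h).exists.choose else 0 with hFdef
  have hF : ∀ x ∈ s, ‖F x‖ = 1 ∧ F x (T x) = ‖T x‖ := by
    intro x hx
    have h := hTx x hx
    simp only [hFdef, dif_pos h]
    exact (hsmooth (T x) h).exists.choose_spec
  have hFuniq : ∀ x ∈ s, ∀ f' : Y →L[ℝ] ℝ, ‖f'‖ = 1 → f' (T x) = ‖T x‖ → f' = F x := by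
    intro x hx f' h1 h2
    have h := hTx x hx
    refine (hsmooth (T x) h).unique ⟨h1, h2⟩ ?_
    simp only [hFdef, dif_pos h]
    exact (hsmooth (T x) h).exists.choose_spec
  -- step 4: generic vectors
  obtain ⟨y₀, hy₀⟩ := baire_avoid hcount F (by
    intro x hx h0
    have := (hF x hx).1
    rw [h0, norm_zero] at this
    exact one_ne_zero this.symm)
  obtain ⟨g₀, hg₀⟩ := baire_avoid hcount
      (fun x => ContinuousLinearMap.apply ℝ ℝ x) (by
    intro x hx h0
    have hxne : x ≠ 0 := by
      intro h
      have := hx.1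
      rw [h, norm_zero] at this
      exact one_ne_zero this.symm
    obtain ⟨f, hf1, hf2⟩ := exists_dual_vector ℝ x (norm_ne_zero_iff.2 hxne)
    have hzero : f x = 0 := by
      have := ContinuousLinearMap.ext_iff.1 h0 f
      rwa [ContinuousLinearMap.apply_apply] at this
    rw [hzero] at hf2
    have : ‖x‖ = (0:ℝ) := by exact_mod_cast hf2.symm
    exact hxne (norm_eq_zero.1 this))
  have hg₀' : ∀ x ∈ s, g₀ x ≠ 0 := by
    intro x hx
    have := hg₀ x hx
    rwa [ContinuousLinearMap.apply_apply] at this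
  set a : ℝ := F x₁ y₀ with hadef
  set b : ℝ := F x₂ y₀ with hbdef
  have ha : a ≠ 0 := hy₀ x₁ hx₁s
  have hb : b ≠ 0 := hy₀ x₂ hx₂s
  obtain ⟨g', hg'1, hg'2⟩ := exists_functional_pair hli a (-b)
  -- step 5: perturbation parameter
  set Bad : Set ℝ := ⋃ x ∈ s, {t : ℝ | g' x + t * g₀ x = 0} with hBadDef
  have hBadCount : Bad.Countable := by
    refine Set.Countable.biUnion hcount (fun x hx => Set.Subsingleton.countable ?_)
    intro t ht r hr
    simp only [Set.mem_setOf_eq] at ht hr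
    have h1 : t * g₀ x = r * g₀ x := by linarith
    exact mul_right_cancel₀ (hg₀' x hx) h1
  set δ : ℝ := min (a ^ 2 / (|a * g₀ x₁| + 1)) (b ^ 2 / (|b * g₀ x₂| + 1)) with hδdef
  have haa : (0:ℝ) < a ^ 2 := by positivity
  have hbb : (0:ℝ) < b ^ 2 := by positivity
  have hδpos : 0 < δ := lt_min (div_pos haa (by positivity)) (div_pos hbb (by positivity))
  obtain ⟨t, htIoo, htBad⟩ : ∃ t ∈ Set.Ioo (-δ) δ, t ∉ Bad := by
    by_contra hcon
    push_neg at hcon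
    have h1 : MeasureTheory.volume (Set.Ioo (-δ) δ) = 0 :=
      le_antisymm
        (le_trans (MeasureTheory.measure_mono hcon)
          (le_of_eq (hBadCount.measure_zero _))) zero_le
    rw [Real.volume_Ioo] at h1
    have h2 : δ - -δ ≤ 0 := by
      by_contra h3
      push_neg at h3
      rw [ENNReal.ofReal_eq_zero] at h1
      linarith
    linarith
  have htabs : |t| < δ := abs_lt.2 ⟨htIoo.1, htIoo.2⟩
  set g : X →L[ℝ] ℝ := g' + t • g₀ with hgdef
  have hgapp : ∀ x : X, g x = g' x + t * g₀ x := by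
    intro x
    simp [hgdef]
  have hgx : ∀ x ∈ s, g x ≠ 0 := by
    intro x hx h0
    apply htBad
    rw [hBadDef]
    refine Set.mem_biUnion hx ?_
    rw [Set.mem_setOf_eq, ← hgapp x]
    exact h0
  have hsign1 : 0 < a * g x₁ := by
    rw [hgapp, hg'1]
    have hd1 : δ ≤ a ^ 2 / (|a * g₀ x₁| + 1) := min_le_left _ _
    have hd2 : δ * (|a * g₀ x₁| + 1) ≤ a ^ 2 :=
      (le_div_iff₀ (by positivity)).1 hd1
    have h4 : |t * (a * g₀ x₁)| < a ^ 2 := by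
      rw [abs_mul]
      calc |t| * |a * g₀ x₁| ≤ |t| * (|a * g₀ x₁| + 1) := by
            nlinarith [abs_nonneg t]
        _ < δ * (|a * g₀ x₁| + 1) := by
            exact mul_lt_mul_of_pos_right htabs (by positivity)
        _ ≤ a ^ 2 := hd2
    have h5 := neg_abs_le (t * (a * g₀ x₁))
    nlinarith
  have hsign2 : b * g x₂ < 0 := by
    rw [hgapp, hg'2]
    have hd1 : δ ≤ b ^ 2 / (|b * g₀ x₂| + 1) := min_le_right _ _
    have hd2 : δ * (|b * g₀ x₂| + 1) ≤ b ^ 2 :=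
      (le_div_iff₀ (by positivity)).1 hd1
    have h4 : |t * (b * g₀ x₂)| < b ^ 2 := by
      rw [abs_mul]
      calc |t| * |b * g₀ x₂| ≤ |t| * (|b * g₀ x₂| + 1) := by
            nlinarith [abs_nonneg t]
        _ < δ * (|b * g₀ x₂| + 1) := by
            exact mul_lt_mul_of_pos_right htabs (by positivity)
        _ ≤ b ^ 2 := hd2
    have h5 := le_abs_self (t * (b * g₀ x₂))
    nlinarith
  -- step 6: the operator A
  set A : X →L[ℝ] Y := g.smulRight y₀ with hAdef
  have hAapp : ∀ x : X, A x = g x • y₀ := fun x => rfl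
  have hFA : ∀ x ∈ s, F x (A x) = g x * F x y₀ := by
    intro x hx
    rw [hAapp, map_smul, smul_eq_mul]
  refine ⟨A, ?_, ?_⟩
  · intro lam
    rcases le_or_gt 0 lam with hlam | hlam
    · have hf := hF x₁ hx₁s
      have hkey : F x₁ ((T + lam • A) x₁) = F x₁ (T x₁) + lam * (g x₁ * a) := by
        rw [ContinuousLinearMap.add_apply, ContinuousLinearMap.smul_apply, map_add,
          map_smul, smul_eq_mul, hFA x₁ hx₁s, ← hadef]
      have hnonneg : 0 ≤ lam * (g x₁ * a) := by
        have : 0 < g x₁ * a := by nlinarith [hsign1]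
        positivity
      calc ‖T‖ = ‖T x₁‖ := hx₁s.2.symm
        _ = F x₁ (T x₁) := hf.2.symm
        _ ≤ F x₁ ((T + lam • A) x₁) := by rw [hkey]; linarith
        _ ≤ ‖F x₁ ((T + lam • A) x₁)‖ := le_abs_self _
        _ ≤ ‖F x₁‖ * ‖(T + lam • A) x₁‖ := (F x₁).le_opNorm _
        _ = ‖(T + lam • A) x₁‖ := by rw [hf.1, one_mul]
        _ ≤ ‖T + lam • A‖ := (T + lam • A).unit_le_opNorm _ (le_of_eq hx₁s.1)
    · have hf := hF x₂ hx₂s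
      have hkey : F x₂ ((T + lam • A) x₂) = F x₂ (T x₂) + lam * (g x₂ * b) := by
        rw [ContinuousLinearMap.add_apply, ContinuousLinearMap.smul_apply, map_add,
          map_smul, smul_eq_mul, hFA x₂ hx₂s, ← hbdef]
      have hnonneg : 0 ≤ lam * (g x₂ * b) := by
        have h6 : g x₂ * b < 0 := by nlinarith [hsign2]
        nlinarith
      calc ‖T‖ = ‖T x₂‖ := hx₂s.2.symm
        _ = F x₂ (T x₂) := hf.2.symm
        _ ≤ F x₂ ((T + lam • A) x₂) := by rw [hkey]; linarith
        _ ≤ ‖F x₂ ((T + lam • A) x₂)‖ := le_abs_self _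
        _ ≤ ‖F x₂‖ * ‖(T + lam • A) x₂‖ := (F x₂).le_opNorm _
        _ = ‖(T + lam • A) x₂‖ := by rw [hf.1, one_mul]
        _ ≤ ‖T + lam • A‖ := (T + lam • A).unit_le_opNorm _ (le_of_eq hx₂s.1)
  · intro x hx hBJ
    obtain ⟨F', hF'1, hF'2, hF'3⟩ := bj_functional (hTx x hx) hBJ
    have heq : F' = F x := hFuniq x hx F' hF'1 hF'2
    have hne : F x (A x) ≠ 0 := by
      rw [hFA x hx]
      exact mul_ne_zero (hgx x hx) (hy₀ x hx)
    rw [heq] at hF'3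
    exact hne hF'3
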